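/- Convexity of the convex roof extension (part of Horodecki's Lemma). Let d be a finite nonempty type and ν : (d → ℂ) → ℝ a function with ν ψ ≥ 0 for every unit vector ψ. For a density matrix ρ ∈ Matrix d d ℂ (positive semidefinite with trace 1), call a finite family ((p_i, ψ_i))_{i ∈ s} a pure-state ensemble for ρ if p_i > 0, ∑ i ∈ s, p_i = 1, each ψ_i : d → ℂ is a unit vector, and ∑ i ∈ s, p_i • vecMulVec ψ_i (star ψ_i) = ρ; define the convex roof CR_ν(ρ) := sInf { ∑ i ∈ s, p_i * ν ψ_i | ((p_i, ψ_i)) an ensemble for ρ }. Then for any density matrices ρ₁, ρ₂, any ensembles ((p_i, ψ_i)) for ρ₁ and ((q_j, φ_j)) for ρ₂, and any t ∈ (0,1): CR_ν(t • ρ₁ + (1 − t) • ρ₂) ≤ t * ∑ i, p_i * ν ψ_i + (1 − t) * ∑ j, q_j * ν φ_j. In particular CR_ν is convex on density matrices. -/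

import Mathlib

open Matrix ComplexOrder

/-- A finite family `(p i, ψ i)_{i ∈ s}` is a pure-state ensemble for `ρ` if the
weights are positive and sum to `1`, each `ψ i` is a unit vector, and
`∑ i ∈ s, p i • |ψ i⟩⟨ψ i| = ρ`. -/
def IsEnsemble {d : Type*} [Fintype d] {ι : Type*} (s : Finset ι)
    (p : ι → ℝ) (ψ : ι → d → ℂ) (ρ : Matrix d d ℂ) : Prop :=
  (∀ i ∈ s, 0 < p i) ∧ (∑ i ∈ s, p i = 1) ∧
  (∀ i ∈ s, ∑ x, ‖ψ i x‖ ^ 2 = 1) ∧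
  (∑ i ∈ s, p i • Matrix.vecMulVec (ψ i) (star (ψ i)) = ρ)

/-- The convex roof extension of `ν`:
`CR_ν(ρ) = inf { ∑ i ∈ s, p i * ν (ψ i) | (p, ψ) an ensemble for ρ }`. -/
noncomputable def convexRoof {d : Type*} [Fintype d]
    (ν : (d → ℂ) → ℝ) (ρ : Matrix d d ℂ) : ℝ :=
  sInf {r : ℝ | ∃ (ι : Type) (s : Finset ι) (p : ι → ℝ) (ψ : ι → d → ℂ),
    IsEnsemble s p ψ ρ ∧ r = ∑ i ∈ s, p i * ν (ψ i)}

/-- **Convexity of the convex roof extension** (part of Horodecki's Lemma):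
for density matrices `ρ₁, ρ₂` with ensembles `(p, ψ)` and `(q, φ)` and
`t ∈ (0,1)`,
`CR_ν (t•ρ₁ + (1-t)•ρ₂) ≤ t * ∑ pᵢ ν(ψᵢ) + (1-t) * ∑ qⱼ ν(φⱼ)`. -/
theorem convexRoof_convex {d : Type*} [Fintype d] [Nonempty d]
    (ν : (d → ℂ) → ℝ)
    (hν : ∀ ψ : d → ℂ, (∑ x, ‖ψ x‖ ^ 2 = 1) → 0 ≤ ν ψ)
    (ρ₁ ρ₂ : Matrix d d ℂ)
    (h₁ : ρ₁.PosSemidef ∧ ρ₁.trace = 1) (h₂ : ρ₂.PosSemidef ∧ ρ₂.trace = 1)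
    {ι₁ ι₂ : Type} (s₁ : Finset ι₁) (p : ι₁ → ℝ) (ψ : ι₁ → d → ℂ)
    (hens₁ : IsEnsemble s₁ p ψ ρ₁)
    (s₂ : Finset ι₂) (q : ι₂ → ℝ) (φ : ι₂ → d → ℂ)
    (hens₂ : IsEnsemble s₂ q φ ρ₂)
    (t : ℝ) (ht0 : 0 < t) (ht1 : t < 1) :
    convexRoof ν (t • ρ₁ + (1 - t) • ρ₂) ≤
      t * ∑ i ∈ s₁, p i * ν (ψ i) + (1 - t) * ∑ j ∈ s₂, q j * ν (φ j) := by
  obtain ⟨hp, hps, hψ, hρ₁⟩ := hens₁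
  obtain ⟨hq, hqs, hφ, hρ₂⟩ := hens₂
  have ht1' : 0 < 1 - t := by linarith
  apply csInf_le
  · refine ⟨0, ?_⟩
    rintro r ⟨ι, s, p', ψ', ⟨hp', _, hψ', _⟩, rfl⟩
    exact Finset.sum_nonneg fun i hi =>
      mul_nonneg (hp' i hi).le (hν _ (hψ' i hi))
  · refine ⟨ι₁ ⊕ ι₂, s₁.disjSum s₂, Sum.elim (fun i => t * p i) (fun j => (1 - t) * q j),
      Sum.elim ψ φ, ⟨?_, ?_, ?_, ?_⟩, ?_⟩
    · rintro (i | j) hij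
      · exact mul_pos ht0 (hp i (by simpa using hij))
      · exact mul_pos ht1' (hq j (by simpa using hij))
    · rw [Finset.sum_disjSum]
      simp only [Sum.elim_inl, Sum.elim_inr, ← Finset.mul_sum, hps, hqs]
      ring
    · rintro (i | j) hij
      · exact hψ i (by simpa using hij)
      · exact hφ j (by simpa using hij)
    · rw [Finset.sum_disjSum, ← hρ₁, ← hρ₂]
      simp only [Sum.elim_inl, Sum.elim_inr, mul_smul, ← Finset.smul_sum]
    · rw [Finset.sum_disjSum]
      simp only [Sum.elim_inl, Sum.elim_inr, Finset.mul_sum, mul_assoc]
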